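/- In the subspace T' = T∖{a} of the five-point space T, the regular closed subsets are exactly the eight sets B∖{a} where B ranges over the regular closed subsets of T, i.e. the sets ∅, {x,b}, {y,b}, {z,b}, {x,z,b}, {y,z,b}, {x,y,b}, and T∖{a}. -/
import Mathlib


/-- The five-point space `T = {x, y, z, a, b}` (five pairwise distinct points). -/
inductive Pt : Type
  | x | y | z | a | b
deriving DecidableEq

open Pt

/-- The topology on `T` generated by the subbasis `{x,z}`, `{y,z}`, `{x,a,y}`. -/
instance : TopologicalSpace Pt :=
  TopologicalSpace.generateFrom ({{x, z}, {y, z}, {x, a, y}} : Set (Set Pt))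

open Set TopologicalSpace

lemma isOpen_iffT (S : Set Pt) :
    IsOpen S ↔ (S = univ ∨ (b ∉ S ∧ (a ∈ S → x ∈ S ∧ y ∈ S))) := by
  constructor
  · intro h
    replace h : GenerateOpen ({{x, z}, {y, z}, {x, a, y}} : Set (Set Pt)) S := h
    induction h with
    | basic U hU =>
      right
      rcases hU with rfl | rfl | rfl <;> simp
    | univ => left; rfl
    | inter U V hU hV ihU ihV =>
      rcases ihU with rfl | ⟨hbU, haU⟩
      · simpa using ihV
      rcases ihV with rfl | ⟨hbV, haV⟩
      · right; simp only [Set.inter_univ]; exact ⟨hbU, haU⟩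
      · right
        refine ⟨fun h => hbU h.1, fun h => ?_⟩
        exact ⟨⟨(haU h.1).1, (haV h.2).1⟩, ⟨(haU h.1).2, (haV h.2).2⟩⟩
    | sUnion 𝒮 h ih =>
      by_cases hu : univ ∈ 𝒮
      · left
        exact eq_univ_of_univ_subset (subset_sUnion_of_mem hu)
      · right
        constructor
        · rintro ⟨U, hU, hbU⟩
          rcases ih U hU with rfl | ⟨hb, -⟩
          · exact hu hU
          · exact hb hbU
        · rintro ⟨U, hU, haU⟩
          rcases ih U hU with rfl | ⟨-, ha⟩
          · exact absurd hU hu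
          · exact ⟨⟨U, hU, (ha haU).1⟩, ⟨U, hU, (ha haU).2⟩⟩
  · rintro (rfl | ⟨hb, ha⟩)
    · exact isOpen_univ
    · have hx : IsOpen ({x} : Set Pt) := by
        have : ({x} : Set Pt) = {x, z} ∩ {x, a, y} := by ext t; cases t <;> simp
        rw [this]
        exact GenerateOpen.inter _ _ (GenerateOpen.basic _ (Or.inl rfl)) (GenerateOpen.basic _ (Or.inr (Or.inr rfl)))
      have hy : IsOpen ({y} : Set Pt) := by
        have : ({y} : Set Pt) = {y, z} ∩ {x, a, y} := by ext t; cases t <;> simp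
        rw [this]
        exact GenerateOpen.inter _ _ (GenerateOpen.basic _ (Or.inr (Or.inl rfl))) (GenerateOpen.basic _ (Or.inr (Or.inr rfl)))
      have hz : IsOpen ({z} : Set Pt) := by
        have : ({z} : Set Pt) = {x, z} ∩ {y, z} := by ext t; cases t <;> simp
        rw [this]
        exact GenerateOpen.inter _ _ (GenerateOpen.basic _ (Or.inl rfl)) (GenerateOpen.basic _ (Or.inr (Or.inl rfl)))
      have hxay : IsOpen ({x, a, y} : Set Pt) := GenerateOpen.basic _ (Or.inr (Or.inr rfl))
      have hS : S = ⋃₀ {U | U ∈ ({{x}, {y}, {z}, {x, a, y}} : Set (Set Pt)) ∧ U ⊆ S} := by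
        ext t
        constructor
        · intro ht
          cases t with
          | x => exact ⟨{x}, ⟨by simp, by simpa using ht⟩, by simp⟩
          | y => exact ⟨{y}, ⟨by simp, by simpa using ht⟩, by simp⟩
          | z => exact ⟨{z}, ⟨by simp, by simpa using ht⟩, by simp⟩
          | a =>
            refine ⟨{x, a, y}, ⟨by simp, ?_⟩, by simp⟩
            intro u hu
            rcases (ha ht) with ⟨hxS, hyS⟩
            rcases hu with rfl | rfl | rfl <;> assumption
          | b => exact absurd ht hb
        · rintro ⟨U, ⟨-, hUS⟩, htU⟩
          exact hUS htU
      rw [hS]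
      apply isOpen_sUnion
      rintro U ⟨hU, -⟩
      rcases hU with rfl | rfl | rfl | rfl <;> assumption

/-- candidate interior -/
def intT (A : Set Pt) : Set Pt := {t | t ∈ A ∧ t ≠ b ∧ (t = a → x ∈ A ∧ y ∈ A)}

lemma interior_eqT (A : Set Pt) (t0 : Pt) (h : t0 ∉ A) : interior A = intT A := by
  apply le_antisymm
  · intro t ht
    rcases (isOpen_iffT (interior A)).1 isOpen_interior with he | ⟨hb, ha⟩
    · exact absurd (interior_subset (he ▸ (mem_univ t0))) h
    · refine ⟨interior_subset ht, fun hbeq => hb (hbeq ▸ ht), fun haeq => ?_⟩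
      exact ⟨interior_subset (ha (haeq ▸ ht)).1, interior_subset (ha (haeq ▸ ht)).2⟩
  · apply interior_maximal
    · intro t ht; exact ht.1
    · rw [isOpen_iffT]
      right
      refine ⟨fun hb => hb.2.1 rfl, fun ha => ?_⟩
      rcases ha with ⟨haA, -, hcond⟩
      rcases hcond rfl with ⟨hx, hy⟩
      exact ⟨⟨hx, by simp, by simp⟩, ⟨hy, by simp, by simp⟩⟩

lemma closure_eqT (A : Set Pt) (t0 : Pt) (h : t0 ∈ A) :
    closure A = {t | t ∈ A ∨ t = b ∨ (t = a ∧ (x ∈ A ∨ y ∈ A))} := by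
  rw [closure_eq_compl_interior_compl, interior_eqT Aᶜ t0 (by simpa using h)]
  ext t
  simp only [intT, mem_compl_iff, mem_setOf_eq]
  tauto

abbrev T' := {t : Pt // t ≠ a}

def xx : T' := ⟨x, by decide⟩
def yy : T' := ⟨y, by decide⟩
def zz : T' := ⟨z, by decide⟩
def bb : T' := ⟨b, by decide⟩

lemma cases4 (t : T') : t = xx ∨ t = yy ∨ t = zz ∨ t = bb := by
  obtain ⟨v, hv⟩ := t
  cases v
  · exact Or.inl rfl
  · exact Or.inr (Or.inl rfl)
  · exact Or.inr (Or.inr (Or.inl rfl))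
  · exact absurd rfl hv
  · exact Or.inr (Or.inr (Or.inr rfl))

lemma isOpen_iffS (V : Set T') : IsOpen V ↔ V = univ ∨ bb ∉ V := by
  constructor
  · rw [isOpen_induced_iff]
    rintro ⟨U, hU, rfl⟩
    rcases (isOpen_iffT U).1 hU with rfl | ⟨hb, -⟩
    · left; simp
    · right; exact hb
  · rintro (rfl | hb)
    · exact isOpen_univ
    · rw [isOpen_induced_iff]
      refine ⟨Subtype.val '' V, ?_, Set.preimage_image_eq V Subtype.val_injective⟩
      rw [isOpen_iffT]
      right
      constructor
      · rintro ⟨t, htV, hteq⟩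
        exact hb (by rwa [show t = bb from Subtype.ext hteq] at htV)
      · rintro ⟨t, htV, hteq⟩
        exact absurd hteq t.2

lemma interior_eqS (V : Set T') (h : V ≠ univ) : interior V = V \ {bb} := by
  apply le_antisymm
  · intro t ht
    rcases (isOpen_iffS (interior V)).1 isOpen_interior with he | hb
    · exact absurd (eq_univ_of_univ_subset (he ▸ interior_subset)) h
    · exact ⟨interior_subset ht, fun hbeq => hb (hbeq ▸ ht)⟩
  · apply interior_maximal
    · exact diff_subset
    · rw [isOpen_iffS]
      right
      simp
lemma closure_eqS (V : Set T') (h : V ≠ ∅) : closure V = V ∪ {bb} := by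
  rw [closure_eq_compl_interior_compl, interior_eqS Vᶜ (by simpa using h)]
  ext t
  simp [mem_compl_iff, mem_diff]
  tauto

lemma rc_iffS (A : Set T') :
    A = closure (interior A) ↔ (A = ∅ ∨ (bb ∈ A ∧ ∃ t ∈ A, t ≠ bb)) := by
  by_cases hA : A = univ
  · subst hA
    simp only [interior_univ, closure_univ, eq_self_iff_true, true_iff]
    right
    exact ⟨trivial, xx, trivial, by decide⟩
  · rw [interior_eqS A hA]
    by_cases h0 : A \ {bb} = ∅
    · rw [h0, closure_empty]
      have hsub : A ⊆ {bb} := by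
        intro t ht
        by_contra htb
        exact (Set.eq_empty_iff_forall_notMem.1 h0 t) ⟨ht, htb⟩
      constructor
      · rintro rfl; exact Or.inl rfl
      · rintro (rfl | ⟨hbA, t, htA, htb⟩)
        · rfl
        · exact absurd (hsub htA) htb
    · rw [closure_eqS _ h0]
      rw [Set.diff_union_self]
      obtain ⟨t, htA, htb⟩ : ∃ t, t ∈ A ∧ t ≠ bb := by
        rcases Set.nonempty_iff_ne_empty.2 h0 with ⟨t, ht⟩
        exact ⟨t, ht.1, ht.2⟩
      constructor
      · intro hEq
        right
        exact ⟨hEq ▸ Or.inr rfl, t, htA, htb⟩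
      · rintro (rfl | ⟨hbA, -⟩)
        · exact absurd htA (by simp)
        · ext u
          simp only [mem_union, mem_singleton_iff]
          constructor
          · exact Or.inl
          · rintro (h | rfl)
            · exact h
            · exact hbA

lemma rc_T (B : Set Pt) (w : Pt) (hw : w ∉ B) (v : Pt) (hv : v ∈ intT B)
    (he : B = {t | t ∈ intT B ∨ t = b ∨ (t = a ∧ (x ∈ intT B ∨ y ∈ intT B))}) :
    B = closure (interior B) := by
  rw [interior_eqT _ w hw, closure_eqT _ v hv]; exact he

lemma mem_pre (v : Pt) (hv : v ≠ a) (B : Set Pt) :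
    (⟨v, hv⟩ : T') ∈ (Subtype.val ⁻¹' B : Set T') ↔ v ∈ B := Iff.rfl

lemma part2 :
    {A : Set T' | A = closure (interior A)} =
      ({∅, Subtype.val ⁻¹' {x, b}, Subtype.val ⁻¹' {y, b}, Subtype.val ⁻¹' {z, b},
        Subtype.val ⁻¹' {x, z, b}, Subtype.val ⁻¹' {y, z, b},
        Subtype.val ⁻¹' {x, y, b}, Set.univ} : Set (Set T')) := by
  have e1 : (Subtype.val ⁻¹' {x, b} : Set T') = {xx, bb} := by
    ext t; rcases cases4 t with rfl | rfl | rfl | rfl <;> simp [xx, yy, zz, bb]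
  have e2 : (Subtype.val ⁻¹' {y, b} : Set T') = {yy, bb} := by
    ext t; rcases cases4 t with rfl | rfl | rfl | rfl <;> simp [xx, yy, zz, bb]
  have e3 : (Subtype.val ⁻¹' {z, b} : Set T') = {zz, bb} := by
    ext t; rcases cases4 t with rfl | rfl | rfl | rfl <;> simp [xx, yy, zz, bb]
  have e4 : (Subtype.val ⁻¹' {x, z, b} : Set T') = {xx, zz, bb} := by
    ext t; rcases cases4 t with rfl | rfl | rfl | rfl <;> simp [xx, yy, zz, bb]
  have e5 : (Subtype.val ⁻¹' {y, z, b} : Set T') = {yy, zz, bb} := by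
    ext t; rcases cases4 t with rfl | rfl | rfl | rfl <;> simp [xx, yy, zz, bb]
  have e6 : (Subtype.val ⁻¹' {x, y, b} : Set T') = {xx, yy, bb} := by
    ext t; rcases cases4 t with rfl | rfl | rfl | rfl <;> simp [xx, yy, zz, bb]
  rw [e1, e2, e3, e4, e5, e6]
  ext A
  rw [mem_setOf_eq, rc_iffS]
  constructor
  · rintro (rfl | ⟨hbA, t, htA, htb⟩)
    · simp
    · by_cases hx : xx ∈ A <;> by_cases hy : yy ∈ A <;> by_cases hz : zz ∈ A
      · -- all : univ
        have : A = univ := by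
          ext u; rcases cases4 u with rfl | rfl | rfl | rfl <;> simp [*]
        simp [this]
      · have : A = {xx, yy, bb} := by
          ext u; rcases cases4 u with rfl | rfl | rfl | rfl <;> simp_all <;> decide
        simp [this]
      · have : A = {xx, zz, bb} := by
          ext u; rcases cases4 u with rfl | rfl | rfl | rfl <;> simp_all <;> decide
        simp [this]
      · have : A = {xx, bb} := by
          ext u; rcases cases4 u with rfl | rfl | rfl | rfl <;> simp_all <;> decide
        simp [this]
      · have : A = {yy, zz, bb} := by
          ext u; rcases cases4 u with rfl | rfl | rfl | rfl <;> simp_all <;> decide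
        simp [this]
      · have : A = {yy, bb} := by
          ext u; rcases cases4 u with rfl | rfl | rfl | rfl <;> simp_all <;> decide
        simp [this]
      · have : A = {zz, bb} := by
          ext u; rcases cases4 u with rfl | rfl | rfl | rfl <;> simp_all <;> decide
        simp [this]
      · exfalso
        rcases cases4 t with rfl | rfl | rfl | rfl
        · exact hx htA
        · exact hy htA
        · exact hz htA
        · exact htb rfl
  · intro hA
    simp only [mem_insert_iff, mem_singleton_iff] at hA
    rcases hA with rfl | rfl | rfl | rfl | rfl | rfl | rfl | rfl
    · exact Or.inl rfl
    · exact Or.inr ⟨by simp, xx, by simp, by decide⟩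
    · exact Or.inr ⟨by simp, yy, by simp, by decide⟩
    · exact Or.inr ⟨by simp, zz, by simp, by decide⟩
    · exact Or.inr ⟨by simp, xx, by simp, by decide⟩
    · exact Or.inr ⟨by simp, yy, by simp, by decide⟩
    · exact Or.inr ⟨by simp, xx, by simp, by decide⟩
    · exact Or.inr ⟨trivial, xx, trivial, by decide⟩

lemma preimage_drop_a (B : Set Pt) :
    (Subtype.val ⁻¹' (insert a B) : Set T') = Subtype.val ⁻¹' B := by
  ext t
  obtain ⟨v, hv⟩ := t
  simp [Set.mem_preimage, Set.mem_insert_iff, hv]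

lemma part1 :
    {A : Set T' | A = closure (interior A)} =
      (fun B : Set Pt => (Subtype.val ⁻¹' B : Set T')) ''
        {B : Set Pt | B = closure (interior B)} := by
  apply le_antisymm
  · intro A hA
    rw [part2] at hA
    simp only [mem_insert_iff, mem_singleton_iff] at hA
    rcases hA with rfl | rfl | rfl | rfl | rfl | rfl | rfl | rfl
    · exact ⟨∅, by simp [mem_setOf_eq], by simp⟩
    · refine ⟨{x, a, b}, rc_T _ y (by simp) x (by simp [intT]) (by ext t; cases t <;> simp [intT]), ?_⟩
      show (Subtype.val ⁻¹' ({x, a, b}) : Set T') = _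
      rw [show ({x, a, b} : Set Pt) = insert a {x, b} by ext t; cases t <;> simp, preimage_drop_a]
    · refine ⟨{y, a, b}, rc_T _ x (by simp) y (by simp [intT]) (by ext t; cases t <;> simp [intT]), ?_⟩
      show (Subtype.val ⁻¹' ({y, a, b}) : Set T') = _
      rw [show ({y, a, b} : Set Pt) = insert a {y, b} by ext t; cases t <;> simp, preimage_drop_a]
    · exact ⟨{z, b}, rc_T _ x (by simp) z (by simp [intT]) (by ext t; cases t <;> simp [intT]), rfl⟩
    · refine ⟨{x, z, a, b}, rc_T _ y (by simp) x (by simp [intT]) (by ext t; cases t <;> simp [intT]), ?_⟩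
      show (Subtype.val ⁻¹' ({x, z, a, b}) : Set T') = _
      rw [show ({x, z, a, b} : Set Pt) = insert a {x, z, b} by ext t; cases t <;> simp,
        preimage_drop_a]
    · refine ⟨{y, z, a, b}, rc_T _ x (by simp) y (by simp [intT]) (by ext t; cases t <;> simp [intT]), ?_⟩
      show (Subtype.val ⁻¹' ({y, z, a, b}) : Set T') = _
      rw [show ({y, z, a, b} : Set Pt) = insert a {y, z, b} by ext t; cases t <;> simp,
        preimage_drop_a]
    · refine ⟨{x, y, a, b}, rc_T _ z (by simp) x (by simp [intT]) (by ext t; cases t <;> simp [intT]), ?_⟩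
      show (Subtype.val ⁻¹' ({x, y, a, b}) : Set T') = _
      rw [show ({x, y, a, b} : Set Pt) = insert a {x, y, b} by ext t; cases t <;> simp,
        preimage_drop_a]
    · exact ⟨univ, by simp [mem_setOf_eq], by simp⟩
  · rintro A ⟨B, hB, rfl⟩
    rw [mem_setOf_eq] at hB
    show (Subtype.val ⁻¹' B : Set T') ∈ {A : Set T' | A = closure (interior A)}
    rw [mem_setOf_eq, rc_iffS]
    by_cases hI : interior B = ∅
    · left
      rw [hB, hI, closure_empty, preimage_empty]
    · obtain ⟨t1, ht1⟩ := Set.nonempty_iff_ne_empty.2 hI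
      rcases (isOpen_iffT (interior B)).1 isOpen_interior with he | ⟨hbI, haI⟩
      · -- interior B = univ, so B = univ
        have hBu : B = univ := eq_univ_of_univ_subset (he ▸ interior_subset)
        right
        refine ⟨by simp [hBu], xx, by simp [hBu], by decide⟩
      · -- pick a point of interior B that is neither a nor b
        obtain ⟨t2, ht2, ht2b, ht2a⟩ : ∃ t2, t2 ∈ interior B ∧ t2 ≠ b ∧ t2 ≠ a := by
          by_cases hta : t1 = a
          · exact ⟨x, (haI (hta ▸ ht1)).1, by decide, by decide⟩
          · exact ⟨t1, ht1, fun h => hbI (h ▸ ht1), hta⟩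
        have hbB : b ∈ B := by
          rw [hB, closure_eqT _ t2 ht2]
          exact Or.inr (Or.inl rfl)
        right
        refine ⟨hbB, ⟨t2, ht2a⟩, Set.mem_preimage.mpr (interior_subset ht2), ?_⟩
        intro h
        exact ht2b (congrArg Subtype.val h)


/-- In the subspace T' = T∖{a}, the regular closed subsets are exactly
the eight sets B∖{a} for B regular closed in T, i.e. ∅, {x,b}, {y,b}, {z,b},
{x,z,b}, {y,z,b}, {x,y,b}, and T∖{a}. -/
theorem stmt7 :
    {A : Set {t : Pt // t ≠ a} | A = closure (interior A)} =
      (fun B : Set Pt => (Subtype.val ⁻¹' B : Set {t : Pt // t ≠ a})) ''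
        {B : Set Pt | B = closure (interior B)} ∧
    {A : Set {t : Pt // t ≠ a} | A = closure (interior A)} =
      ({∅, Subtype.val ⁻¹' {x, b}, Subtype.val ⁻¹' {y, b}, Subtype.val ⁻¹' {z, b},
        Subtype.val ⁻¹' {x, z, b}, Subtype.val ⁻¹' {y, z, b},
        Subtype.val ⁻¹' {x, y, b}, Set.univ} : Set (Set {t : Pt // t ≠ a})) := ⟨part1, part2⟩
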